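/- Let G be a countably based infinite pro-p group with a filtration series S: G = G_0 ⊇ G_1 ⊇ … and closed subgroups K ≤ H ≤ G. If K has strong Hausdorff dimension in H with respect to the induced filtration S|_H : H ∩ G_i, then hdim^S_G(K) = hdim^S_G(H) · hdim^{S|_H}_H(K). -/

import Mathlib

open Filter

private lemma stmt9_aux_div (a e d : ℝ) (h : e = 0 → a = 0) :
    a / d = (a / e) * (e / d) := by
  rcases eq_or_ne e 0 with he | he
  · simp [he, h he]
  · rw [div_mul_div_comm, mul_comm a e, mul_div_mul_left _ _ he]

set_option maxHeartbeats 1000000 in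
/-- Let `G` be a countably based infinite pro-`p` group (a compact,
totally disconnected, second countable topological group in which every open
subgroup has `p`-power index) with a filtration series `S` of open normal subgroups
with trivial intersection, and let `K ≤ H ≤ G` be closed subgroups.  If `K` has
strong Hausdorff dimension in `H` with respect to the induced filtration
`S|_H : H ∩ G_i`, then `hdim^S_G(K) = hdim^S_G(H) · hdim^{S|_H}_H(K)`.

Here `hdim` is the lower limit of the quotients of logarithmic indices. -/
theorem stmt9 (p : ℕ) (hp : p.Prime)
    (G : Type*) [Group G] [TopologicalSpace G] [IsTopologicalGroup G]
    [CompactSpace G] [TotallyDisconnectedSpace G]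
    [SecondCountableTopology G] [Infinite G]
    (hpro : ∀ U : Subgroup G, IsOpen ((U : Set G)) → ∃ n : ℕ, U.index = p ^ n)
    (S : ℕ → Subgroup G) (hS0 : S 0 = ⊤) (hanti : Antitone S)
    (hopen : ∀ i, IsOpen ((S i : Set G))) (hnorm : ∀ i, (S i).Normal)
    (hint : ⨅ i, S i = ⊥)
    (K H : Subgroup G) (hKH : K ≤ H)
    (hKcl : IsClosed ((K : Set G))) (hHcl : IsClosed ((H : Set G)))
    -- `K` has strong Hausdorff dimension in `H` w.r.t. `S|_H`:
    (hstrong : Tendsto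
      (fun i : ℕ => Real.log (((H ⊓ S i).relIndex (K ⊔ (H ⊓ S i)) : ℕ)) /
        Real.log (((S i).relIndex H : ℕ))) atTop
      (nhds (liminf
        (fun i : ℕ => Real.log (((H ⊓ S i).relIndex (K ⊔ (H ⊓ S i)) : ℕ)) /
          Real.log (((S i).relIndex H : ℕ))) atTop))) :
    liminf (fun i : ℕ =>
        Real.log (((S i).relIndex (K ⊔ S i) : ℕ)) / Real.log (((S i).index : ℕ))) atTop =
      liminf (fun i : ℕ =>
          Real.log (((S i).relIndex (H ⊔ S i) : ℕ)) / Real.log (((S i).index : ℕ))) atTop *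
      liminf (fun i : ℕ =>
          Real.log (((H ⊓ S i).relIndex (K ⊔ (H ⊓ S i)) : ℕ)) /
            Real.log (((S i).relIndex H : ℕ))) atTop := by
  classical
  -- basic numerical facts about the indices
  have hDfin : ∀ i, Finite (G ⧸ S i) := fun i =>
    Subgroup.quotient_finite_of_isOpen _ (hopen i)
  have hD0 : ∀ i, (S i).index ≠ 0 := fun i => by
    haveI := hDfin i; exact Subgroup.index_ne_zero_of_finite
  have hEdvd : ∀ i, (S i).relIndex H ∣ (S i).index := fun i => by
    haveI := hnorm i; exact Subgroup.relIndex_dvd_index_of_normal (S i) H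
  have hE0 : ∀ i, (S i).relIndex H ≠ 0 := fun i h => by
    have := hEdvd i; rw [h] at this; exact hD0 i (zero_dvd_iff.mp this)
  -- key group-theoretic identities
  have key2 : ∀ i, (S i).relIndex (H ⊔ S i) = (S i).relIndex H := fun i => by
    haveI := hnorm i; exact Subgroup.relIndex_sup_right H (S i)
  have key1 : ∀ i, (H ⊓ S i).relIndex (K ⊔ (H ⊓ S i)) = (S i).relIndex (K ⊔ S i) := by
    intro i
    haveI := hnorm i
    have hle : K ⊔ (H ⊓ S i) ≤ H := sup_le hKH inf_le_left
    have h2 : (H ⊓ S i).subgroupOf H = (S i).subgroupOf H := by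
      rw [inf_comm, Subgroup.inf_subgroupOf_right]
    calc (H ⊓ S i).relIndex (K ⊔ (H ⊓ S i))
        = ((H ⊓ S i).subgroupOf H).relIndex ((K ⊔ (H ⊓ S i)).subgroupOf H) :=
          (Subgroup.relIndex_subgroupOf hle).symm
      _ = ((S i).subgroupOf H).relIndex
            (K.subgroupOf H ⊔ ((S i).subgroupOf H)) := by
          rw [Subgroup.subgroupOf_sup hKH inf_le_left, h2]
      _ = ((S i).subgroupOf H).relIndex (K.subgroupOf H) :=
          Subgroup.relIndex_sup_right _ _
      _ = (S i).relIndex K := Subgroup.relIndex_subgroupOf hKH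
      _ = (S i).relIndex (K ⊔ S i) := (Subgroup.relIndex_sup_right K (S i)).symm
  -- if the induced index is trivial then so is the index of `K`
  have hEA : ∀ i, (S i).relIndex H = 1 → (S i).relIndex (K ⊔ S i) = 1 := by
    intro i h
    have hHS : H ≤ S i := Subgroup.relIndex_eq_one.mp h
    exact Subgroup.relIndex_eq_one.mpr (sup_le (hKH.trans hHS) le_rfl)
  set u : ℕ → ℝ := fun i : ℕ =>
    Real.log (((H ⊓ S i).relIndex (K ⊔ (H ⊓ S i)) : ℕ)) /
      Real.log (((S i).relIndex H : ℕ)) with hu_def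
  set v : ℕ → ℝ := fun i : ℕ =>
    Real.log (((S i).relIndex (H ⊔ S i) : ℕ)) / Real.log (((S i).index : ℕ)) with hv_def
  have hu0 : ∀ i, 0 ≤ u i := fun i =>
    div_nonneg (Real.log_natCast_nonneg _) (Real.log_natCast_nonneg _)
  have hv0 : ∀ i, 0 ≤ v i := fun i =>
    div_nonneg (Real.log_natCast_nonneg _) (Real.log_natCast_nonneg _)
  have hv1 : ∀ i, v i ≤ 1 := by
    intro i
    have hED : (S i).relIndex (H ⊔ S i) ≤ (S i).index := by
      rw [key2 i]; exact Nat.le_of_dvd (Nat.pos_of_ne_zero (hD0 i)) (hEdvd i)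
    have hEpos : 0 < (((S i).relIndex (H ⊔ S i) : ℕ) : ℝ) := by
      have : (S i).relIndex (H ⊔ S i) ≠ 0 := by rw [key2 i]; exact hE0 i
      exact_mod_cast Nat.pos_of_ne_zero this
    have hlog : Real.log (((S i).relIndex (H ⊔ S i) : ℕ)) ≤
        Real.log (((S i).index : ℕ)) :=
      Real.log_le_log hEpos (by exact_mod_cast hED)
    exact div_le_one_of_le₀ hlog (Real.log_natCast_nonneg _)
  -- the pointwise factorisation
  have hfun : (fun i : ℕ =>
      Real.log (((S i).relIndex (K ⊔ S i) : ℕ)) / Real.log (((S i).index : ℕ)))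
      = u * v := by
    funext i
    show _ = u i * v i
    rw [hu_def, hv_def]
    simp only
    rw [key1 i, key2 i]
    refine stmt9_aux_div _ _ _ ?_
    intro hlogE
    have hE1 : (S i).relIndex H = 1 := by
      rcases Real.log_eq_zero.mp hlogE with h | h | h
      · exact absurd (Nat.cast_eq_zero.mp h) (hE0 i)
      · exact_mod_cast h
      · exfalso
        have hnn : (0:ℝ) ≤ (((S i).relIndex H : ℕ) : ℝ) := Nat.cast_nonneg _
        rw [h] at hnn; linarith
    rw [hEA i hE1]
    simp
  -- boundedness facts
  have hubdd : IsBoundedUnder (· ≤ ·) atTop u := hstrong.isBoundedUnder_le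
  have hvbdd : IsBoundedUnder (· ≤ ·) atTop v :=
    isBoundedUnder_of_eventually_le (Eventually.of_forall hv1)
  have hvcobdd : IsCoboundedUnder (· ≥ ·) atTop v := hvbdd.isCoboundedUnder_ge
  have h0u : 0 ≤ᶠ[atTop] u := Eventually.of_forall hu0
  have h0v : 0 ≤ᶠ[atTop] v := Eventually.of_forall hv0
  have h1 : liminf (u * v) atTop ≤ limsup u atTop * liminf v atTop :=
    liminf_mul_le h0u hubdd h0v hvcobdd
  have h2 : liminf u atTop * liminf v atTop ≤ liminf (u * v) atTop :=
    le_liminf_mul h0u hubdd h0v hvcobdd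
  rw [hstrong.limsup_eq] at h1
  rw [hfun]
  exact (le_antisymm h1 h2).trans (mul_comm _ _)
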